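/- For a finite family of contraction maps w₁,…,wₙ on a complete nonempty metric space X, there exists a unique nonempty compact set A ⊆ X such that A = w₁(A) ∪ ⋯ ∪ wₙ(A). -/

import Mathlib

open Metric EMetric Set TopologicalSpace Function

/-- Hutchinson's theorem: a finite family of contractions on a complete nonempty
metric space has a unique nonempty compact invariant set (the attractor). -/
theorem hutchinson_attractor_exists_unique
    {X : Type*} [MetricSpace X] [CompleteSpace X] [Nonempty X]
    (n : ℕ) (hn : 0 < n) (w : Fin n → X → X)
    (hw : ∀ i, ∃ K : NNReal, K < 1 ∧ LipschitzWith K (w i)) :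
    ∃! A : Set X, A.Nonempty ∧ IsCompact A ∧ A = ⋃ i, w i '' A := by
  classical
  choose K hK1 hLip using hw
  haveI : Nonempty (Fin n) := ⟨⟨0, hn⟩⟩
  set Km : NNReal := Finset.univ.sup' Finset.univ_nonempty K with hKmdef
  have hKm1 : Km < 1 := by
    rw [hKmdef, Finset.sup'_lt_iff]
    intro i _; exact hK1 i
  have hKle : ∀ i, K i ≤ Km := fun i => Finset.le_sup' K (Finset.mem_univ i)
  have hcomp : ∀ s : NonemptyCompacts X, IsCompact (⋃ i, w i '' (s : Set X)) :=
    fun s => isCompact_iUnion fun i => s.isCompact.image (hLip i).continuous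
  have hne : ∀ s : NonemptyCompacts X, (⋃ i, w i '' (s : Set X)).Nonempty := by
    intro s
    obtain ⟨x, hx⟩ := s.nonempty
    exact ⟨w ⟨0, hn⟩ x, mem_iUnion.2 ⟨⟨0, hn⟩, mem_image_of_mem _ hx⟩⟩
  set F : NonemptyCompacts X → NonemptyCompacts X := fun s =>
    ⟨⟨⋃ i, w i '' (s : Set X), hcomp s⟩, hne s⟩ with hFdef
  have key : ∀ s t : NonemptyCompacts X,
      ∀ x ∈ ⋃ i, w i '' (s : Set X), ∃ y ∈ ⋃ i, w i '' (t : Set X),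
        edist x y ≤ Km * hausdorffEdist (s : Set X) (t : Set X) := by
    intro s t x hx
    obtain ⟨i, a, ha, rfl⟩ := mem_iUnion.1 hx
    obtain ⟨b, hb, hab⟩ := t.isCompact.exists_infEdist_eq_edist t.nonempty a
    refine ⟨w i b, mem_iUnion.2 ⟨i, mem_image_of_mem _ hb⟩, ?_⟩
    calc edist (w i a) (w i b) ≤ K i * edist a b := hLip i a b
      _ ≤ Km * hausdorffEdist (s : Set X) (t : Set X) := by
          apply mul_le_mul'
          · exact_mod_cast hKle i
          · rw [← hab]; exact infEdist_le_hausdorffEdist_of_mem ha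
  have hFlip : LipschitzWith Km F := by
    intro s t
    have hst : edist s t = hausdorffEdist (s : Set X) (t : Set X) := rfl
    have hFst : edist (F s) (F t)
        = hausdorffEdist (⋃ i, w i '' (s : Set X)) (⋃ i, w i '' (t : Set X)) := rfl
    rw [hst, hFst]
    apply hausdorffEdist_le_of_mem_edist (key s t)
    intro x hx
    obtain ⟨y, hy, hxy⟩ := key t s x hx
    exact ⟨y, hy, by unfold hausdorffEdist at hxy ⊢; rwa [hausdorffEDist_comm]⟩
  have hC : ContractingWith Km F := ⟨hKm1, hFlip⟩
  haveI : Nonempty (NonemptyCompacts X) :=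
    ⟨⟨⟨{Classical.arbitrary X}, isCompact_singleton⟩, Set.singleton_nonempty _⟩⟩
  set A := hC.fixedPoint F with hA
  have hAfix : F A = A := hC.fixedPoint_isFixedPt
  refine ⟨(A : Set X), ⟨A.nonempty, A.isCompact, ?_⟩, ?_⟩
  · conv_lhs => rw [← hAfix]
    rfl
  · rintro B ⟨hBne, hBc, hBeq⟩
    set B' : NonemptyCompacts X := ⟨⟨B, hBc⟩, hBne⟩ with hB'
    have hfix : Function.IsFixedPt F B' := by
      apply NonemptyCompacts.ext
      exact hBeq.symm
    have := hC.fixedPoint_unique hfix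
    exact congrArg (fun s : NonemptyCompacts X => (s : Set X)) this
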